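/- If G is a simple graph on n ≥ 3 vertices such that d(u)+d(v) ≥ n for every pair of nonadjacent vertices u, v, then G contains a Hamiltonian cycle. -/

import Mathlib

open List

namespace OreAux

variable {V : Type*} [DecidableEq V] {G : SimpleGraph V}
set_option linter.unusedSectionVars false
set_option linter.unreachableTactic false
set_option linter.unusedTactic false


/-- Build a walk from a chain of adjacent vertices. -/
def chainWalk (G : SimpleGraph V) : ∀ (u v : V) (l : List V),
    List.Chain G.Adj u (l ++ [v]) → G.Walk u v
  | _, _, [], h => SimpleGraph.Walk.cons (List.chain_cons.mp h).1 SimpleGraph.Walk.nil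
  | _, v, a :: l, h =>
      SimpleGraph.Walk.cons (List.chain_cons.mp h).1
        (chainWalk G a v l (List.chain_cons.mp h).2)

lemma chainWalk_support (u v : V) (l : List V) (h : List.Chain G.Adj u (l ++ [v])) :
    (chainWalk G u v l h).support = u :: (l ++ [v]) := by
  induction l generalizing u with
  | nil => simp [chainWalk]
  | cons a l ih =>
    simp [chainWalk]
    exact ih _ _

lemma startEnd_not_mem_edges {u v : V} (q : G.Walk u v) (hn : q.support.Nodup)
    (hl : 2 ≤ q.length) : s(u, v) ∉ q.edges := by
  cases q with
  | nil => simp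
  | @cons _ w _ h q' =>
    rw [SimpleGraph.Walk.support_cons, List.nodup_cons] at hn
    intro hmem
    rw [SimpleGraph.Walk.edges_cons, List.mem_cons] at hmem
    rcases hmem with heq | hmem'
    · rw [Sym2.eq_iff] at heq
      rcases heq with ⟨-, rfl⟩ | ⟨h1, rfl⟩
      · -- q' : G.Walk v v with nodup support, so q' = nil, length too small
        have hp : q'.IsPath := SimpleGraph.Walk.IsPath.mk' hn.2
        have : q' = SimpleGraph.Walk.nil := by
          have := SimpleGraph.Path.loop_eq (⟨q', hp⟩ : G.Path v v)
          simpa [SimpleGraph.Path.nil] using congrArg Subtype.val this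
        subst this
        simp at hl
      · exact h.ne h1
    · exact hn.1 (q'.fst_mem_support_of_mem_edges hmem')

/-- A "cyclic list" for `G`: consecutive elements adjacent, and last adjacent to head. -/
def Cyc' (G : SimpleGraph V) (C : List V) : Prop :=
  C.Chain' G.Adj ∧ ∀ a ∈ C.getLast?, ∀ b ∈ C.head?, G.Adj a b

lemma ham_of_cyc [Fintype V] (hcard : 3 ≤ Fintype.card V)
    (C : List V) (hC : Cyc' G C) (hnd : C.Nodup) (hfull : ∀ x, x ∈ C) :
    ∃ w, ∃ c : G.Walk w w, c.IsHamiltonianCycle := by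
  obtain ⟨hchain, hclosed⟩ := hC
  have hlen : C.length = Fintype.card V := by
    rw [← List.toFinset_card_of_nodup hnd]
    rw [show C.toFinset = Finset.univ from Finset.eq_univ_iff_forall.mpr
      (by simpa using hfull), Finset.card_univ]
  have hCne : C ≠ [] := by intro hh; rw [hh] at hlen; simp at hlen; omega
  obtain ⟨u, M, rfl⟩ := List.exists_cons_of_ne_nil hCne
  have hMne : M ≠ [] := by
    intro hh; rw [hh] at hlen; simp at hlen; omega
  have hM : M.dropLast ++ [M.getLast hMne] = M := List.dropLast_append_getLast hMne
  set v := M.getLast hMne with hv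
  set l := M.dropLast with hldef
  have hchain' : List.Chain G.Adj u (l ++ [v]) := by
    rw [hM]; exact hchain
  have hclose : G.Adj v u := by
    refine hclosed v ?_ u rfl
    rw [List.getLast?_cons, hv]
    simp [List.getLast?_eq_getLast hMne]
  set q := chainWalk G u v l hchain' with hq
  have hsup : q.support = u :: M := by rw [hq, chainWalk_support, hM]
  have hqlen : 2 ≤ q.length := by
    have h1 : q.support.length = q.length + 1 := q.length_support
    rw [hsup, hlen] at h1
    omega
  refine ⟨u, SimpleGraph.Walk.cons hclose.symm q.reverse, ?_⟩
  rw [SimpleGraph.Walk.isHamiltonianCycle_iff_isCycle_and_support_count_tail_eq_one]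
  constructor
  · rw [SimpleGraph.Walk.cons_isCycle_iff]
    constructor
    · rw [SimpleGraph.Walk.isPath_def, SimpleGraph.Walk.support_reverse, List.nodup_reverse, hsup]
      exact hnd
    · rw [SimpleGraph.Walk.edges_reverse, List.mem_reverse]
      exact startEnd_not_mem_edges q (hsup ▸ hnd) hqlen
  · intro a
    rw [SimpleGraph.Walk.support_cons, List.tail_cons, SimpleGraph.Walk.support_reverse,
      List.count_reverse, hsup]
    exact List.count_eq_one_of_mem hnd (hfull a)

lemma Cyc'.rotate_one {C : List V} (h : Cyc' G C) : Cyc' G (C.rotate 1) := by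
  match C with
  | [] => simpa using h
  | a :: t =>
    rw [show (1 : ℕ) = 0 + 1 from rfl, List.rotate_cons_succ, List.rotate_zero]
    obtain ⟨hc, hcl⟩ := h
    constructor
    · refine List.IsChain.append hc.tail (List.isChain_singleton a) ?_
      intro x hx y hy
      simp only [List.head?_cons, Option.mem_def, Option.some.injEq] at hy
      subst hy
      have htne : t ≠ [] := by rintro rfl; simp at hx
      refine hcl x ?_ a rfl
      match t, htne with
      | b :: t', _ => simpa using hx
    · intro x hx y hy
      rw [List.getLast?_concat] at hx
      simp only [Option.mem_def, Option.some.injEq] at hx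
      subst hx
      match t with
      | [] =>
        simp only [List.nil_append, List.head?_cons, Option.mem_def, Option.some.injEq] at hy
        subst hy
        exact hcl a (by simp) a (by simp)
      | b :: t' =>
        simp only [List.cons_append, List.head?_cons, Option.mem_def, Option.some.injEq] at hy
        subst hy
        exact (List.isChain_cons_cons.mp hc).1

lemma Cyc'.rotate {C : List V} (h : Cyc' G C) (k : ℕ) : Cyc' G (C.rotate k) := by
  induction k with
  | zero => simpa using h
  | succ m ih =>
    have : C.rotate (m + 1) = (C.rotate m).rotate 1 := by rw [List.rotate_rotate]
    rw [this]
    exact ih.rotate_one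

lemma full_length [Fintype V] {P : List V} (hnd : P.Nodup) (hfull : ∀ x, x ∈ P) :
    P.length = Fintype.card V := by
  rw [← List.toFinset_card_of_nodup hnd]
  rw [show P.toFinset = Finset.univ from Finset.eq_univ_iff_forall.mpr
    (by simpa using hfull), Finset.card_univ]

lemma surgery [Fintype V] {u v : V} (hcard : 3 ≤ Fintype.card V) (hna : ¬ G.Adj u v)
    (hdeg : Fintype.card V ≤ (G.neighborSet u).ncard + (G.neighborSet v).ncard)
    {P : List V} (hP : P.Chain' G.Adj) (hnd : P.Nodup) (hfull : ∀ x, x ∈ P)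
    (hne : P ≠ []) (hhead : P.head hne = u) (hlast : P.getLast hne = v) :
    ∃ C, Cyc' G C ∧ C.Nodup ∧ ∀ x, x ∈ C := by
  classical
  have hlen : P.length = Fintype.card V := full_length hnd hfull
  rw [← hlen] at hcard hdeg
  clear hlen
  have hnP : 0 < P.length := by omega
  have hx0 : P[0] = u := by rw [← hhead, List.head_eq_getElem]
  have hxl : P[P.length - 1]'(by omega) = v := by rw [← hlast, List.getLast_eq_getElem]
  set A : Finset ℕ := (Finset.range (P.length - 1)).filter
    (fun i => ∃ h : i + 1 < P.length, G.Adj u (P[i+1])) with hA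
  set B : Finset ℕ := (Finset.range (P.length - 1)).filter
    (fun i => ∃ h : i < P.length, G.Adj v (P[i])) with hB
  have hAcard : (G.neighborSet u).ncard ≤ A.card := by
    rw [Set.ncard_eq_toFinset_card']
    refine Finset.card_le_card_of_injOn (fun w => P.idxOf w - 1) ?_ ?_
    · intro w hw
      rw [Finset.mem_coe, Set.mem_toFinset, SimpleGraph.mem_neighborSet] at hw
      have hj : P.idxOf w < P.length := List.idxOf_lt_length_iff.mpr (hfull w)
      have hjw : P[P.idxOf w] = w := List.getElem_idxOf hj
      have hj0 : P.idxOf w ≠ 0 := by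
        intro h0
        simp only [h0, hx0] at hjw
        exact hw.ne hjw
      show P.idxOf w - 1 ∈ A
      rw [hA, Finset.mem_filter, Finset.mem_range]
      have hidx : P.idxOf w - 1 + 1 = P.idxOf w := by omega
      refine ⟨by omega, by omega, ?_⟩
      simp only [hidx, hjw]
      exact hw
    · intro w1 hw1 w2 hw2 heq
      have heq' : P.idxOf w1 - 1 = P.idxOf w2 - 1 := heq
      have h1 : P.idxOf w1 < P.length := List.idxOf_lt_length_iff.mpr (hfull w1)
      have h2 : P.idxOf w2 < P.length := List.idxOf_lt_length_iff.mpr (hfull w2)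
      have hw1' : G.Adj u w1 := by simpa using hw1
      have hw2' : G.Adj u w2 := by simpa using hw2
      have hj01 : P.idxOf w1 ≠ 0 := by
        intro h0
        have hjw := List.getElem_idxOf h1
        simp only [h0, hx0] at hjw
        exact hw1'.ne hjw
      have hj02 : P.idxOf w2 ≠ 0 := by
        intro h0
        have hjw := List.getElem_idxOf h2
        simp only [h0, hx0] at hjw
        exact hw2'.ne hjw
      have heq2 : P.idxOf w1 = P.idxOf w2 := by omega
      rw [← List.getElem_idxOf h1, ← List.getElem_idxOf h2]
      simp only [heq2]
  have hBcard : (G.neighborSet v).ncard ≤ B.card := by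
    rw [Set.ncard_eq_toFinset_card']
    refine Finset.card_le_card_of_injOn (fun w => P.idxOf w) ?_ ?_
    · intro w hw
      rw [Finset.mem_coe, Set.mem_toFinset, SimpleGraph.mem_neighborSet] at hw
      have hj : P.idxOf w < P.length := List.idxOf_lt_length_iff.mpr (hfull w)
      have hjw : P[P.idxOf w] = w := List.getElem_idxOf hj
      have hjl : P.idxOf w ≠ P.length - 1 := by
        intro h0
        simp only [h0, hxl] at hjw
        exact hw.ne hjw
      show P.idxOf w ∈ B
      rw [hB, Finset.mem_filter, Finset.mem_range]
      refine ⟨by omega, hj, ?_⟩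
      simp only [hjw]
      exact hw
    · intro w1 hw1 w2 hw2 heq
      have heq' : P.idxOf w1 = P.idxOf w2 := heq
      have h1 : P.idxOf w1 < P.length := List.idxOf_lt_length_iff.mpr (hfull w1)
      have h2 : P.idxOf w2 < P.length := List.idxOf_lt_length_iff.mpr (hfull w2)
      rw [← List.getElem_idxOf h1, ← List.getElem_idxOf h2]
      simp only [heq']
  have hsub : A ∪ B ⊆ Finset.range (P.length - 1) := by
    rw [hA, hB]
    exact Finset.union_subset (Finset.filter_subset _ _) (Finset.filter_subset _ _)
  have hABne : (A ∩ B).Nonempty := by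
    rw [← Finset.card_pos]
    have h1 := Finset.card_union_add_card_inter A B
    have h2 : (A ∪ B).card ≤ P.length - 1 := by
      have := Finset.card_le_card hsub
      simpa using this
    omega
  obtain ⟨i, hi⟩ := hABne
  rw [Finset.mem_inter, hA, hB, Finset.mem_filter, Finset.mem_filter, Finset.mem_range] at hi
  obtain ⟨⟨hi1, hi2, hiu⟩, -, hi3, hiv⟩ := hi
  have hi0 : i ≠ 0 := by
    rintro rfl
    rw [hx0] at hiv
    exact hna hiv.symm
  have hin : i + 1 ≠ P.length - 1 := by
    intro h0
    apply hna
    have : P[i+1] = v := by simp only [h0, hxl]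
    rwa [this] at hiu
  have hdne : P.drop (i+1) ≠ [] := by
    rw [ne_eq, List.drop_eq_nil_iff]; omega
  have htne : P.take (i+1) ≠ [] := by
    have h0 : 0 < (P.take (i+1)).length := by rw [List.length_take]; omega
    exact List.length_pos_iff.mp h0
  have htrne : (P.take (i+1)).reverse ≠ [] := by simpa using htne
  have hperm : P.drop (i+1) ++ (P.take (i+1)).reverse ~ P := by
    calc P.drop (i+1) ++ (P.take (i+1)).reverse
        ~ P.drop (i+1) ++ P.take (i+1) := List.Perm.append_left _ (List.reverse_perm _)
      _ ~ P.take (i+1) ++ P.drop (i+1) := List.perm_append_comm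
      _ = P := List.take_append_drop _ _
  refine ⟨P.drop (i+1) ++ (P.take (i+1)).reverse, ⟨?_, ?_⟩, hperm.nodup_iff.mpr hnd,
    fun x => hperm.mem_iff.mpr (hfull x)⟩
  · -- chain
    refine List.IsChain.append (hP.drop _) ?_ ?_
    · rw [List.isChain_reverse]
      exact (hP.take _).imp (fun a b hab => hab.symm)
    · intro x hx y hy
      have e1 : (P.drop (i+1)).getLast? = some v := by
        rw [List.getLast?_eq_getLast hdne, List.getLast_eq_getElem]
        congr 1
        rw [List.getElem_drop]
        rw [← hxl]
        congr 1
        rw [List.length_drop]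
        omega
      have e2 : (P.take (i+1)).reverse.head? = some (P[i]) := by
        rw [List.head?_reverse, List.getLast?_eq_getLast htne, List.getLast_eq_getElem]
        congr 1
        rw [List.getElem_take]
        congr 1
        rw [List.length_take]
        omega
      rw [e1, Option.mem_def, Option.some.injEq] at hx
      rw [e2, Option.mem_def, Option.some.injEq] at hy
      subst hx; subst hy
      exact hiv
  · -- closed
    intro x hx y hy
    have e1 : (P.drop (i+1) ++ (P.take (i+1)).reverse).getLast? = some u := by
      rw [List.getLast?_append, List.getLast?_reverse, List.head?_eq_head htne]
      rw [List.head_eq_getElem, List.getElem_take, hx0]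
      rfl
    have e2 : (P.drop (i+1) ++ (P.take (i+1)).reverse).head? = some (P[i+1]) := by
      rw [List.head?_append_of_ne_nil _ hdne, List.head?_eq_head hdne, List.head_eq_getElem,
        List.getElem_drop]
    rw [e1, Option.mem_def, Option.some.injEq] at hx
    rw [e2, Option.mem_def, Option.some.injEq] at hy
    subst hx; subst hy
    exact hiu

lemma descend [Fintype V] {u v : V} (hcard : 3 ≤ Fintype.card V) (huv : u ≠ v)
    (hna : ¬ G.Adj u v)
    (hdeg : Fintype.card V ≤ (G.neighborSet u).ncard + (G.neighborSet v).ncard)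
    {C : List V} (hC : Cyc' (G ⊔ SimpleGraph.fromEdgeSet {s(u,v)}) C) (hnd : C.Nodup)
    (hfull : ∀ x, x ∈ C) :
    ∃ C', Cyc' G C' ∧ C'.Nodup ∧ ∀ x, x ∈ C' := by
  classical
  set G' := G ⊔ SimpleGraph.fromEdgeSet {s(u,v)} with hG'
  have hadj : ∀ a b : V, G'.Adj a b ↔ G.Adj a b ∨ (a = u ∧ b = v) ∨ (a = v ∧ b = u) := by
    intro a b
    rw [hG', SimpleGraph.sup_adj, SimpleGraph.fromEdgeSet_adj, Set.mem_singleton_iff,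
      Sym2.eq_iff]
    constructor
    · rintro (h | ⟨(⟨rfl, rfl⟩ | ⟨rfl, rfl⟩), hne⟩)
      · exact Or.inl h
      · exact Or.inr (Or.inl ⟨rfl, rfl⟩)
      · exact Or.inr (Or.inr ⟨rfl, rfl⟩)
    · rintro (h | ⟨rfl, rfl⟩ | ⟨rfl, rfl⟩)
      · exact Or.inl h
      · exact Or.inr ⟨Or.inl ⟨rfl, rfl⟩, huv⟩
      · exact Or.inr ⟨Or.inr ⟨rfl, rfl⟩, huv.symm⟩
  -- rotate so that u is first
  have hlenC : C.length = Fintype.card V := full_length hnd hfull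
  have hk : C.idxOf u < C.length := List.idxOf_lt_length_iff.mpr (hfull u)
  set D := C.rotate (C.idxOf u) with hD
  have hDC : D ~ C := List.rotate_perm C _
  have hDnd : D.Nodup := hDC.nodup_iff.mpr hnd
  have hDfull : ∀ x, x ∈ D := fun x => hDC.mem_iff.mpr (hfull x)
  have hDcyc : Cyc' G' D := hC.rotate _
  have hDlen : D.length = C.length := (List.length_rotate _ _)
  have hDne : D ≠ [] := by
    intro hh
    have := congrArg List.length hh
    rw [hDlen, hlenC] at this
    simp at this
    omega
  have hD0 : D[0]'(by rw [hDlen]; omega) = u := by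
    show (C.rotate (C.idxOf u))[0]'_ = u
    rw [List.getElem_rotate]
    simp only [Nat.zero_add]
    simp only [Nat.mod_eq_of_lt hk]
    exact List.getElem_idxOf hk
  obtain ⟨a, M, hDM⟩ := List.exists_cons_of_ne_nil hDne
  have hau : a = u := by
    have := hD0
    simp only [hDM] at this
    simpa using this
  subst hau
  -- basic facts about M
  have hMlen : M.length + 1 = Fintype.card V := by
    have := hlenC
    rw [← hDlen, hDM] at this
    simpa using this
  have hMne : M ≠ [] := by
    intro hh; rw [hh] at hMlen; simp at hMlen; omega
  have huM : a ∉ M := by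
    have := hDnd
    rw [hDM, List.nodup_cons] at this
    exact this.1
  have hMnd : M.Nodup := by
    have := hDnd
    rw [hDM, List.nodup_cons] at this
    exact this.2
  set b := M.head hMne with hb
  set c := M.getLast hMne with hc
  have hbM : b ∈ M := List.head_mem hMne
  have hcM : c ∈ M := List.getLast_mem hMne
  have hbu : b ≠ a := fun hh => huM (hh ▸ hbM)
  have hcu : c ≠ a := fun hh => huM (hh ▸ hcM)
  have hbc : b ≠ c := by
    intro hh
    have h2 : 2 ≤ M.length := by omega
    have e1 : M[0]'(by omega) = b := by rw [hb, List.head_eq_getElem]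
    have e2 : M[M.length - 1]'(by omega) = c := by rw [hc, List.getLast_eq_getElem]
    have := hMnd.getElem_inj_iff.mp (by rw [e1, e2, hh] : M[0]'(by omega) = M[M.length-1]'(by omega))
    omega
  -- middle edges are G-edges
  have hMchain : M.Chain' G.Adj := by
    have hDchain : List.Chain' G'.Adj M := by
      have := hDcyc.1
      rw [hDM] at this
      exact this.tail
    rw [List.Chain', List.isChain_iff_getElem] at hDchain ⊢
    intro i hi
    have h1 := hDchain i hi
    rw [hadj] at h1
    rcases h1 with h1 | ⟨h1, -⟩ | ⟨-, h1⟩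
    · exact h1
    · exact absurd (h1 ▸ List.getElem_mem _) huM
    · exact absurd (h1 ▸ List.getElem_mem _) huM
  -- first and closing edges
  have hfirst : G'.Adj a b := by
    have := hDcyc.1
    rw [hDM, List.Chain', List.isChain_cons] at this
    exact this.1 b (by rw [hb, List.head?_eq_head hMne]; rfl)
  have hclose : G'.Adj c a := by
    refine hDcyc.2 c ?_ a ?_
    · rw [hDM, List.getLast?_cons, hc]
      simp [List.getLast?_eq_getLast hMne]
    · rw [hDM]; rfl
  have hfirst' : G.Adj a b ∨ b = v := by
    rw [hadj] at hfirst
    rcases hfirst with h | ⟨-, rfl⟩ | ⟨h1, -⟩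
    · exact Or.inl h
    · exact Or.inr rfl
    · exact absurd h1 huv
  have hclose' : G.Adj c a ∨ c = v := by
    rw [hadj] at hclose
    rcases hclose with h | ⟨rfl, h2⟩ | ⟨h1, -⟩
    · exact Or.inl h
    · exact absurd rfl (h2 ▸ hcu)
    · exact Or.inr h1
  have hMrevne : M.reverse ≠ [] := by simpa using hMne
  rcases hfirst' with hab | hbv
  · rcases hclose' with hca | hcv
    · -- D itself works
      refine ⟨a :: M, ⟨?_, ?_⟩, hDM ▸ hDnd, fun x => hDM ▸ hDfull x⟩
      · rw [List.Chain', List.isChain_cons]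
        refine ⟨?_, hMchain⟩
        intro y hy
        rw [List.head?_eq_head hMne, Option.mem_def, Option.some.injEq] at hy
        subst hy
        exact hab
      · intro x hx y hy
        rw [List.getLast?_cons, List.getLast?_eq_getLast hMne] at hx
        simp only [Option.or_some, Option.mem_def, Option.some.injEq] at hx
        rw [List.head?_cons, Option.mem_def, Option.some.injEq] at hy
        subst hx; subst hy
        exact hca
    · -- c = v : path a :: M from a to v
      refine surgery hcard hna hdeg ?_ (hDM ▸ hDnd) (fun x => hDM ▸ hDfull x)
        (List.cons_ne_nil a M) (by rw [List.head_cons]) ?_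
      · rw [List.Chain', List.isChain_cons]
        refine ⟨?_, hMchain⟩
        intro y hy
        rw [List.head?_eq_head hMne, Option.mem_def, Option.some.injEq] at hy
        subst hy
        exact hab
      · rw [List.getLast_cons hMne, ← hc]
        exact hcv
  · -- b = v : path a :: M.reverse from a to v
    have hca : G.Adj c a := by
      rcases hclose' with h | h
      · exact h
      · exact absurd (hbv.trans h.symm) hbc
    have hndrev : (a :: M.reverse).Nodup := by
      rw [List.nodup_cons, List.mem_reverse, List.nodup_reverse]
      exact ⟨huM, hMnd⟩
    have hfullrev : ∀ x, x ∈ a :: M.reverse := by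
      intro x
      have := hDM ▸ hDfull x
      rw [List.mem_cons] at this ⊢
      rcases this with h | h
      · exact Or.inl h
      · exact Or.inr (List.mem_reverse.mpr h)
    refine surgery hcard hna hdeg ?_ hndrev hfullrev
      (List.cons_ne_nil a M.reverse) (by rw [List.head_cons]) ?_
    · rw [List.Chain', List.isChain_cons]
      constructor
      · intro y hy
        rw [List.head?_reverse, List.getLast?_eq_getLast hMne, Option.mem_def,
          Option.some.injEq] at hy
        subst hy
        exact hca.symm
      · rw [List.isChain_reverse]
        exact hMchain.imp (fun x y hxy => hxy.symm)
    · rw [List.getLast_cons hMrevne]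
      have h1 : M.reverse.getLast? = some b := by
        rw [List.getLast?_reverse, List.head?_eq_head hMne]
      have h2 : M.reverse.getLast? = some (M.reverse.getLast hMrevne) :=
        List.getLast?_eq_getLast _
      have := Option.some_inj.mp (h2.symm.trans h1)
      rw [this]
      exact hbv

lemma ore_core (n : ℕ) (hn : 3 ≤ n) :
    ∀ (k : ℕ) (G : SimpleGraph (Fin n)),
      (∀ u v : Fin n, u ≠ v → ¬ G.Adj u v →
        n ≤ (G.neighborSet u).ncard + (G.neighborSet v).ncard) →
      {p : Fin n × Fin n | p.1 ≠ p.2 ∧ ¬ G.Adj p.1 p.2}.ncard ≤ k →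
      ∃ C : List (Fin n), Cyc' G C ∧ C.Nodup ∧ ∀ x, x ∈ C := by
  intro k
  induction k with
  | zero =>
    intro G hore hcd
    -- G must be complete
    have hcomp : ∀ a b : Fin n, a ≠ b → G.Adj a b := by
      intro a b hab
      by_contra hnadj
      have hmem : (a, b) ∈ {p : Fin n × Fin n | p.1 ≠ p.2 ∧ ¬ G.Adj p.1 p.2} := ⟨hab, hnadj⟩
      have := (Set.ncard_pos (Set.toFinite _)).mpr ⟨_, hmem⟩
      omega
    refine ⟨List.finRange n, ⟨?_, ?_⟩, List.nodup_finRange n, fun x => List.mem_finRange x⟩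
    · exact ((List.nodup_finRange n).isChain ).imp (fun a b hab => hcomp a b hab)
    · intro x hx y hy
      have hne : (List.finRange n) ≠ [] := by
        intro hh
        have := congrArg List.length hh
        simp at this
        omega
      rw [List.getLast?_eq_getLast hne, Option.mem_def, Option.some.injEq] at hx
      rw [List.head?_eq_head hne, Option.mem_def, Option.some.injEq] at hy
      subst hx; subst hy
      refine hcomp _ _ ?_
      rw [List.getLast_eq_getElem, List.head_eq_getElem]
      intro hh
      have hlen : (List.finRange n).length = n := by simp
      have := (List.nodup_finRange n).getElem_inj_iff.mp hh
      omega
  | succ k ih =>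
    intro G hore hcd
    by_cases hcomp : ∀ a b : Fin n, a ≠ b → G.Adj a b
    · refine ⟨List.finRange n, ⟨?_, ?_⟩, List.nodup_finRange n, fun x => List.mem_finRange x⟩
      · exact ((List.nodup_finRange n).isChain).imp (fun a b hab => hcomp a b hab)
      · intro x hx y hy
        have hne : (List.finRange n) ≠ [] := by
          intro hh
          have := congrArg List.length hh
          simp at this
          omega
        rw [List.getLast?_eq_getLast hne, Option.mem_def, Option.some.injEq] at hx
        rw [List.head?_eq_head hne, Option.mem_def, Option.some.injEq] at hy
        subst hx; subst hy
        refine hcomp _ _ ?_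
        rw [List.getLast_eq_getElem, List.head_eq_getElem]
        intro hh
        have hlen : (List.finRange n).length = n := by simp
        have := (List.nodup_finRange n).getElem_inj_iff.mp hh
        omega
    · push_neg at hcomp
      obtain ⟨u, v, huv, hna⟩ := hcomp
      set G' := G ⊔ SimpleGraph.fromEdgeSet {s(u,v)} with hG'
      have hle : ∀ a b : Fin n, G.Adj a b → G'.Adj a b := by
        intro a b h
        rw [hG', SimpleGraph.sup_adj]
        exact Or.inl h
      have hore' : ∀ a b : Fin n, a ≠ b → ¬ G'.Adj a b →
          n ≤ (G'.neighborSet a).ncard + (G'.neighborSet b).ncard := by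
        intro a b hab hnadj
        have h1 : ¬ G.Adj a b := fun h => hnadj (hle a b h)
        have h2 := hore a b hab h1
        have h3 : (G.neighborSet a).ncard ≤ (G'.neighborSet a).ncard :=
          Set.ncard_le_ncard (fun x hx => hle a x hx) (Set.toFinite _)
        have h4 : (G.neighborSet b).ncard ≤ (G'.neighborSet b).ncard :=
          Set.ncard_le_ncard (fun x hx => hle b x hx) (Set.toFinite _)
        omega
      have hmeas : {p : Fin n × Fin n | p.1 ≠ p.2 ∧ ¬ G'.Adj p.1 p.2}.ncard ≤ k := by
        have hsub : {p : Fin n × Fin n | p.1 ≠ p.2 ∧ ¬ G'.Adj p.1 p.2} ⊆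
            {p : Fin n × Fin n | p.1 ≠ p.2 ∧ ¬ G.Adj p.1 p.2} := by
          intro p hp
          exact ⟨hp.1, fun h => hp.2 (hle _ _ h)⟩
        have hne2 : {p : Fin n × Fin n | p.1 ≠ p.2 ∧ ¬ G'.Adj p.1 p.2} ≠
            {p : Fin n × Fin n | p.1 ≠ p.2 ∧ ¬ G.Adj p.1 p.2} := by
          intro heq
          have hmem : (u, v) ∈ {p : Fin n × Fin n | p.1 ≠ p.2 ∧ ¬ G.Adj p.1 p.2} := ⟨huv, hna⟩
          rw [← heq] at hmem
          apply hmem.2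
          rw [hG', SimpleGraph.sup_adj, SimpleGraph.fromEdgeSet_adj]
          exact Or.inr ⟨rfl, huv⟩
        have hss := ssubset_of_subset_of_ne hsub hne2
        have := Set.ncard_lt_ncard hss (Set.toFinite _)
        omega
      obtain ⟨C, hC, hnd, hfull⟩ := ih G' hore' hmeas
      have hcard3 : 3 ≤ Fintype.card (Fin n) := by simpa using hn
      have hdeg : Fintype.card (Fin n) ≤
          (G.neighborSet u).ncard + (G.neighborSet v).ncard := by
        have := hore u v huv hna
        simpa using this
      exact descend hcard3 huv hna hdeg hC hnd hfull

end OreAux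

theorem ore_hamiltonian_cycle (n : ℕ) (hn : 3 ≤ n) (G : SimpleGraph (Fin n))
    [DecidableRel G.Adj]
    (h : ∀ u v : Fin n, u ≠ v → ¬ G.Adj u v → n ≤ G.degree u + G.degree v) :
    ∃ (u : Fin n) (c : G.Walk u u), c.IsHamiltonianCycle := by
  have hdeg : ∀ u v : Fin n, u ≠ v → ¬ G.Adj u v →
      n ≤ (G.neighborSet u).ncard + (G.neighborSet v).ncard := by
    intro u v h1 h2
    have e : ∀ w : Fin n, (G.neighborSet w).ncard = G.degree w := by
      intro w
      rw [← Nat.card_coe_set_eq, Nat.card_eq_fintype_card,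
        G.card_neighborSet_eq_degree]
    rw [e u, e v]
    exact h u v h1 h2
  obtain ⟨C, hC, hnd, hfull⟩ := OreAux.ore_core n hn _ G hdeg le_rfl
  exact OreAux.ham_of_cyc (by simpa using hn) C hC hnd hfull
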